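/- arXiv:2407.01868 — 8 statements merged into one kernel-verified Lean document; each statement's English description precedes it below -/
import Mathlib

section
/- Let W be an (m+p)×(m+p) symmetric positive definite matrix, C a p×(m+p) full row rank matrix, and J = [I_m 0] the m×(m+p) selection matrix picking the first m coordinates. Then J W C' (C W C')⁻¹ C W J' is positive semi-definite; in particular every diagonal entry of J W J' - J M W J' is non-negative, where M = I - W C' (C W C')⁻¹ C. -/
open Matrix

theorem flap_subvector_variance_reduction_psd (m p : ℕ)
    (W : Matrix (Fin m ⊕ Fin p) (Fin m ⊕ Fin p) ℝ) (hW : W.PosDef)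
    (C : Matrix (Fin p) (Fin m ⊕ Fin p) ℝ) (hC : C.rank = p) :
    let J : Matrix (Fin m) (Fin m ⊕ Fin p) ℝ := fromCols 1 0
    let M : Matrix (Fin m ⊕ Fin p) (Fin m ⊕ Fin p) ℝ :=
      1 - W * Cᵀ * (C * W * Cᵀ)⁻¹ * C
    (J * W * Cᵀ * (C * W * Cᵀ)⁻¹ * C * W * Jᵀ).PosSemidef ∧
      ∀ i, 0 ≤ (J * W * Jᵀ - J * M * W * Jᵀ) i i := by
  intro J M
  -- rows of C are linearly independent
  have hrows : LinearIndependent ℝ (fun i => C i) := by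
    rw [linearIndependent_iff_card_eq_finrank_span]
    rw [Set.finrank]
    change _ = Module.finrank ℝ (Submodule.span ℝ (Set.range C.row))
    rw [← Matrix.rank_eq_finrank_span_row, hC, Fintype.card_fin]
  have hinj : Function.Injective C.vecMul := Matrix.vecMul_injective_iff.mpr hrows
  -- C W Cᵀ is positive definite
  have hWt : Wᵀ = W := (W.conjTranspose_eq_transpose_of_trivial ▸ hW.isHermitian : Wᵀ = W)
  have hS : (C * W * Cᵀ).PosDef := by
    have hpsd := hW.posSemidef.mul_mul_conjTranspose_same C
    rw [C.conjTranspose_eq_transpose_of_trivial] at hpsd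
    refine .of_dotProduct_mulVec_pos hpsd.1 fun x hx => ?_
    have hx' : C.vecMul x ≠ 0 := fun h => hx (hinj (by simpa using h))
    have := hW.dotProduct_mulVec_pos (x := Cᵀ *ᵥ x) (by rwa [Matrix.mulVec_transpose])
    calc (0:ℝ) < star (Cᵀ *ᵥ x) ⬝ᵥ W *ᵥ (Cᵀ *ᵥ x) := this
      _ = star x ⬝ᵥ (C * W * Cᵀ) *ᵥ x := by
          simp only [star_trivial, ← Matrix.mulVec_mulVec, Matrix.mulVec_transpose]
          rw [Matrix.dotProduct_mulVec (x ᵥ* C), Matrix.dotProduct_mulVec x,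
            Matrix.dotProduct_mulVec, Matrix.vecMul_vecMul]
  have hSinv : ((C * W * Cᵀ)⁻¹).PosSemidef := hS.inv.posSemidef
  -- rewrite as B * S⁻¹ * Bᴴ
  have key : (J * W * Cᵀ * (C * W * Cᵀ)⁻¹ * C * W * Jᵀ).PosSemidef := by
    have hB : (J * W * Cᵀ * (C * W * Cᵀ)⁻¹ * ((J * W * Cᵀ))ᴴ).PosSemidef :=
      hSinv.mul_mul_conjTranspose_same (J * W * Cᵀ)
    have heq : (J * W * Cᵀ)ᴴ = C * W * Jᵀ := by
      rw [conjTranspose_eq_transpose_of_trivial, transpose_mul, transpose_mul,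
        transpose_transpose, hWt, Matrix.mul_assoc]
    rw [heq, ← Matrix.mul_assoc, ← Matrix.mul_assoc] at hB
    exact hB
  refine ⟨key, fun i => ?_⟩
  have hdiff : J * W * Jᵀ - J * M * W * Jᵀ
      = J * W * Cᵀ * (C * W * Cᵀ)⁻¹ * C * W * Jᵀ := by
    simp only [M, Matrix.sub_mul, Matrix.mul_sub, Matrix.one_mul, Matrix.mul_one,
      Matrix.mul_assoc]
    abel
  rw [hdiff]
  simpa using key.dotProduct_mulVec_nonneg (Pi.single i 1)
end

section
/- Let Φ ∈ ℝ^{p×m} with p ≤ m have orthonormal rows, C = [-Φ I_p], W = I_{m+p}, and J = [I_m 0]. Then tr(J C'(C C')⁻¹ C J') = p/2. In particular if p = m then J C'(C C')⁻¹ C J' = (1/2) I_m. -/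
open Matrix

theorem flap_identityW_trace_reduction (m p : ℕ) (hp : p ≤ m)
    (Φ : Matrix (Fin p) (Fin m) ℝ) (hΦ : Φ * Φᵀ = 1) :
    let C : Matrix (Fin p) (Fin m ⊕ Fin p) ℝ := fromCols (-Φ) 1
    let J : Matrix (Fin m) (Fin m ⊕ Fin p) ℝ := fromCols 1 0
    (J * Cᵀ * (C * Cᵀ)⁻¹ * C * Jᵀ).trace = (p : ℝ) / 2 ∧
      (p = m → J * Cᵀ * (C * Cᵀ)⁻¹ * C * Jᵀ = (1 / 2 : ℝ) • 1) := by
  intro C J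
  have hCCt : C * Cᵀ = (2 : ℝ) • 1 := by
    simp only [C, transpose_fromCols, fromCols_mul_fromRows, transpose_neg,
      Matrix.neg_mul, Matrix.mul_neg, neg_neg, hΦ, Matrix.one_mul, Matrix.mul_one,
      transpose_one]
    rw [two_smul]
  have hinv : (C * Cᵀ)⁻¹ = ((1 / 2 : ℝ)) • 1 := by
    apply inv_eq_right_inv
    rw [hCCt, smul_mul_assoc, mul_smul_comm, smul_smul]
    norm_num
  have hJC : J * Cᵀ = -Φᵀ := by
    simp [C, J, transpose_fromCols, fromCols_mul_fromRows]
  have hCJ : C * Jᵀ = -Φ := by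
    simp [C, J, transpose_fromCols, fromCols_mul_fromRows]
  have hE : J * Cᵀ * (C * Cᵀ)⁻¹ * C * Jᵀ = (1 / 2 : ℝ) • (Φᵀ * Φ) := by
    rw [hinv, hJC]
    simp only [Matrix.mul_smul, Matrix.smul_mul, Matrix.mul_one]
    congr 1
    rw [Matrix.mul_assoc, hCJ, Matrix.neg_mul, Matrix.mul_neg, neg_neg]
  constructor
  · rw [hE, trace_smul, trace_mul_comm, hΦ, trace_one]
    simp [div_eq_mul_inv, mul_comm]
  · intro hpm
    subst hpm
    rw [hE, mul_eq_one_comm.mp hΦ]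
end

section
/- Let W* be a symmetric positive definite (m+p+q)×(m+p+q) matrix with leading principal (m+p)×(m+p) block W. Let C be p×(m+p) of full row rank and C̄ = [C 0_{p×q}]. Define M⁺ = I_{m+p+q} - W* C̄' (C̄ W* C̄')⁻¹ C̄ and M = I_{m+p} - W C' (C W C')⁻¹ C. Then the leading (m+p)×(m+p) principal submatrix of M⁺ W* equals M W. (Adding components without imposing their constraints leaves the projected error covariance of the original block unchanged.) -/
open Matrix

theorem flap_add_components_without_constraints (m p q : ℕ)
    (Wstar : Matrix (Fin (m + p) ⊕ Fin q) (Fin (m + p) ⊕ Fin q) ℝ)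
    (hWstar : Wstar.PosDef)
    (C : Matrix (Fin p) (Fin (m + p)) ℝ) (hC : C.rank = p) :
    let W : Matrix (Fin (m + p)) (Fin (m + p)) ℝ := Wstar.toBlocks₁₁
    let Cbar : Matrix (Fin p) (Fin (m + p) ⊕ Fin q) ℝ := fromCols C 0
    let Mplus : Matrix (Fin (m + p) ⊕ Fin q) (Fin (m + p) ⊕ Fin q) ℝ :=
      1 - Wstar * Cbarᵀ * (Cbar * Wstar * Cbarᵀ)⁻¹ * Cbar
    let M : Matrix (Fin (m + p)) (Fin (m + p)) ℝ :=
      1 - W * Cᵀ * (C * W * Cᵀ)⁻¹ * C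
    (Mplus * Wstar).toBlocks₁₁ = M * W := by
  intro W Cbar Mplus M
  set A := Wstar.toBlocks₁₂ with hA
  set B := Wstar.toBlocks₂₁ with hB
  set D := Wstar.toBlocks₂₂ with hD
  have hWs : Wstar = fromBlocks W A B D := (fromBlocks_toBlocks Wstar).symm
  have hCt : Cbarᵀ = fromRows Cᵀ 0 := by
    simp [Cbar, transpose_fromCols]
  have hS : Cbar * Wstar * Cbarᵀ = C * W * Cᵀ := by
    rw [hWs, hCt]
    simp [Cbar, fromCols_mul_fromBlocks, fromCols_mul_fromRows, Matrix.mul_assoc]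
  have hsub : ∀ X Y : Matrix (Fin (m + p) ⊕ Fin q) (Fin (m + p) ⊕ Fin q) ℝ,
      (X - Y).toBlocks₁₁ = X.toBlocks₁₁ - Y.toBlocks₁₁ := by
    intro X Y; ext i j; simp [toBlocks₁₁]
  show ((1 - Wstar * Cbarᵀ * (Cbar * Wstar * Cbarᵀ)⁻¹ * Cbar) * Wstar).toBlocks₁₁ = M * W
  rw [hS, Matrix.sub_mul, Matrix.one_mul]
  rw [show Wstar * Cbarᵀ * (C * W * Cᵀ)⁻¹ * Cbar * Wstar
      = Wstar * Cbarᵀ * ((C * W * Cᵀ)⁻¹ * (Cbar * Wstar)) from by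
    simp only [Matrix.mul_assoc]]
  rw [hCt]
  nth_rewrite 2 3 [hWs]
  simp only [Cbar, fromCols_mul_fromBlocks, Matrix.zero_mul, zero_add, add_zero,
    Matrix.mul_zero, fromBlocks_mul_fromRows, Matrix.mul_fromCols,
    fromRows_mul_fromCols, fromRows_mul, fromCols_fromRows_eq_fromBlocks]
  rw [hsub, toBlocks_fromBlocks₁₁]
  have : Wstar.toBlocks₁₁ = W := rfl
  rw [this]
  simp [M, Matrix.sub_mul, Matrix.mul_assoc]
end

section
/- Let W* be symmetric positive definite of size n = m+p+q, let C̄ ∈ ℝ^{p×n} and C_low ∈ ℝ^{q×n} be such that the stacked matrix C* = [C̄; C_low] ∈ ℝ^{(p+q)×n} has full row rank. Define M⁺ = I - W* C̄'(C̄ W* C̄')⁻¹ C̄. Then C*'(C* W* C*')⁻¹ C* = C̄'(C̄ W* C̄')⁻¹ C̄ + M⁺' C_low' (C_low M⁺ W* C_low')⁻¹ C_low M⁺. -/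
open Matrix Module

lemma aux_posdef_cwc {m : Type*} [Fintype m] {n : ℕ}
    {W : Matrix (Fin n) (Fin n) ℝ} (hW : W.PosDef)
    (C : Matrix m (Fin n) ℝ) (h : C.rank = Fintype.card m) :
    (C * W * Cᵀ).PosDef := by
  have hCT : Cᵀ = Cᴴ := (conjTranspose_eq_transpose_of_trivial C).symm
  rw [posDef_iff_dotProduct_mulVec]; constructor
  · rw [hCT]; exact isHermitian_mul_mul_conjTranspose C hW.isHermitian
  · intro x hx
    have hinj : Function.Injective (Cᵀ.mulVecLin) := by
      rw [← LinearMap.ker_eq_bot]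
      have h1 := (Cᵀ.mulVecLin).finrank_range_add_finrank_ker
      have h2 : finrank ℝ (LinearMap.range Cᵀ.mulVecLin) = Cᵀ.rank := rfl
      rw [h2, Matrix.rank_transpose, h] at h1
      rw [finrank_fintype_fun_eq_card] at h1
      have h3 : finrank ℝ (LinearMap.ker Cᵀ.mulVecLin) = 0 := by omega
      exact Submodule.finrank_eq_zero.mp h3
    have hy : Cᵀ *ᵥ x ≠ 0 := by
      intro hcon
      exact hx (hinj (by rw [map_zero, mulVecLin_apply]; exact hcon))
    have := hW.dotProduct_mulVec_pos (x := Cᵀ *ᵥ x) hy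
    have hrw : star x ⬝ᵥ ((C * W * Cᵀ) *ᵥ x) = star (Cᵀ *ᵥ x) ⬝ᵥ (W *ᵥ (Cᵀ *ᵥ x)) := by
      rw [← mulVec_mulVec, ← mulVec_mulVec, dotProduct_mulVec, star_trivial,
        star_trivial, ← mulVec_transpose]
    rw [hrw]
    exact this

lemma aux_block11_posdef {m l : Type*} [Fintype m] [Fintype l] [DecidableEq m] [DecidableEq l]
    {A : Matrix m m ℝ} {B : Matrix m l ℝ} {C : Matrix l m ℝ} {D : Matrix l l ℝ}
    (h : (fromBlocks A B C D).PosDef) : A.PosDef := by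
  rw [posDef_iff_dotProduct_mulVec]; constructor
  · have h1 := h.isHermitian
    rw [IsHermitian, fromBlocks_conjTranspose] at h1
    have h2 := congrArg Matrix.toBlocks₁₁ h1
    simpa [toBlocks_fromBlocks₁₁, IsSymm] using h2
  · intro x hx
    have hy : (Sum.elim x 0 : m ⊕ l → ℝ) ≠ 0 := by
      intro hcon
      apply hx
      funext i
      have := congrFun hcon (Sum.inl i)
      simpa using this
    have := h.dotProduct_mulVec_pos (x := Sum.elim x 0) hy
    simpa [dotProduct, Fintype.sum_sum_type, fromBlocks_mulVec, mulVec, dotProduct] using this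

theorem flap_block_projection_identity (n p q : ℕ)
    (Wstar : Matrix (Fin n) (Fin n) ℝ) (hWstar : Wstar.PosDef)
    (Cbar : Matrix (Fin p) (Fin n) ℝ) (Clow : Matrix (Fin q) (Fin n) ℝ)
    (hrank : (fromRows Cbar Clow).rank = p + q) :
    let Cstar : Matrix (Fin p ⊕ Fin q) (Fin n) ℝ := fromRows Cbar Clow
    let Mplus : Matrix (Fin n) (Fin n) ℝ :=
      1 - Wstar * Cbarᵀ * (Cbar * Wstar * Cbarᵀ)⁻¹ * Cbar
    Cstarᵀ * (Cstar * Wstar * Cstarᵀ)⁻¹ * Cstar =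
      Cbarᵀ * (Cbar * Wstar * Cbarᵀ)⁻¹ * Cbar +
        Mplusᵀ * Clowᵀ * (Clow * Mplus * Wstar * Clowᵀ)⁻¹ * Clow * Mplus := by
  intro Cstar Mplus
  have hCs : Cstar = fromRows Cbar Clow := rfl
  have hM : Mplus = 1 - Wstar * Cbarᵀ * (Cbar * Wstar * Cbarᵀ)⁻¹ * Cbar := rfl
  rw [hCs, hM]
  have hWT : Wstarᵀ = Wstar := by
    rw [← conjTranspose_eq_transpose_of_trivial]; exact hWstar.isHermitian
  have hK : fromRows Cbar Clow * Wstar * (fromRows Cbar Clow)ᵀ =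
      fromBlocks (Cbar * Wstar * Cbarᵀ) (Cbar * Wstar * Clowᵀ)
        (Clow * Wstar * Cbarᵀ) (Clow * Wstar * Clowᵀ) := by
    rw [transpose_fromRows, fromRows_mul, fromRows_mul_fromCols]
  have hKpd : (fromBlocks (Cbar * Wstar * Cbarᵀ) (Cbar * Wstar * Clowᵀ)
      (Clow * Wstar * Cbarᵀ) (Clow * Wstar * Clowᵀ)).PosDef := by
    rw [← hK]
    exact aux_posdef_cwc hWstar _ (by simp [hrank])
  have hApd := aux_block11_posdef hKpd
  haveI iA : Invertible (Cbar * Wstar * Cbarᵀ) := hApd.isUnit.invertible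
  haveI iK : Invertible (fromBlocks (Cbar * Wstar * Cbarᵀ) (Cbar * Wstar * Clowᵀ)
      (Clow * Wstar * Cbarᵀ) (Clow * Wstar * Clowᵀ)) := hKpd.isUnit.invertible
  haveI iS : Invertible (Clow * Wstar * Clowᵀ -
      Clow * Wstar * Cbarᵀ * ⅟(Cbar * Wstar * Cbarᵀ) * (Cbar * Wstar * Clowᵀ)) :=
    invertibleOfFromBlocks₁₁Invertible _ _ _ _
  have hSe : Clow * (1 - Wstar * Cbarᵀ * (Cbar * Wstar * Cbarᵀ)⁻¹ * Cbar) * Wstar * Clowᵀ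
      = Clow * Wstar * Clowᵀ -
        Clow * Wstar * Cbarᵀ * ⅟(Cbar * Wstar * Cbarᵀ) * (Cbar * Wstar * Clowᵀ) := by
    rw [invOf_eq_nonsing_inv]
    simp only [Matrix.mul_sub, Matrix.sub_mul, Matrix.mul_one, Matrix.one_mul, Matrix.mul_assoc]
  rw [hK, ← invOf_eq_nonsing_inv, invOf_fromBlocks₁₁_eq, transpose_fromRows,
    fromCols_mul_fromBlocks, fromCols_mul_fromRows, hSe]
  simp only [invOf_eq_nonsing_inv, transpose_sub, transpose_mul, transpose_one,
    transpose_transpose, transpose_nonsing_inv, hWT,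
    Matrix.mul_add, Matrix.add_mul, Matrix.mul_sub, Matrix.sub_mul, Matrix.neg_mul,
    Matrix.mul_neg, Matrix.one_mul, Matrix.mul_one, Matrix.mul_assoc]
  abel
end

section
/- With the same setup (W* symmetric positive definite, C* = [C̄; C_low] full row rank, M⁺ = I - W* C̄'(C̄ W* C̄')⁻¹ C̄), the matrix W*(C*'(C* W* C*')⁻¹ C* - C̄'(C̄ W* C̄')⁻¹ C̄)W* = W* M⁺' C_low' (C_low M⁺ W* C_low')⁻¹ C_low M⁺ W* is positive semi-definite. Consequently, for any selection matrix J*, each diagonal entry of J* W* C*'(C* W* C*')⁻¹ C* W* J*' minus the corresponding diagonal entry of J* W* C̄'(C̄ W* C̄')⁻¹ C̄ W* J*' is non-negative (monotonicity of variance reduction as constraints are added). -/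
open Matrix

private lemma posdef_CWCt {k n : Type*} [Fintype k] [Fintype n] [DecidableEq k] [DecidableEq n]
    (W : Matrix n n ℝ) (hW : W.PosDef) (C : Matrix k n ℝ)
    (h : LinearIndependent ℝ (fun i => C i)) : (C * W * Cᵀ).PosDef := by
  rw [posDef_iff_dotProduct_mulVec]
  constructor
  · have := (hW.posSemidef.mul_mul_conjTranspose_same C).isHermitian
    rwa [conjTranspose_eq_transpose_of_trivial] at this
  · intro x hx
    have hy : x ᵥ* C ≠ 0 := by
      intro h0
      exact hx (Matrix.vecMul_injective_iff.mpr h (by simp [h0]))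
    have := hW.dotProduct_mulVec_pos hy
    simpa [dotProduct_mulVec, mulVec_transpose, ← Matrix.mulVec_mulVec] using this

private lemma psd_inv {n : Type*} [Fintype n] [DecidableEq n] {S : Matrix n n ℝ}
    (h : S.PosSemidef) (hu : IsUnit S.det) : S⁻¹.PosSemidef := by
  have := h.conjTranspose_mul_mul_same S⁻¹
  rwa [conjTranspose_nonsing_inv, h.isHermitian.eq, Matrix.mul_assoc,
    Matrix.mul_nonsing_inv _ hu, Matrix.mul_one] at this

private lemma psd_diag {n : Type*} [Fintype n] [DecidableEq n] {S : Matrix n n ℝ}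
    (h : S.PosSemidef) (i : n) : 0 ≤ S i i := by
  exact h.diag_nonneg

theorem flap_monotonicity_of_variance_reduction (m r p q : ℕ)
    (Wstar : Matrix (Fin m ⊕ Fin r) (Fin m ⊕ Fin r) ℝ) (hWstar : Wstar.PosDef)
    (Cbar : Matrix (Fin p) (Fin m ⊕ Fin r) ℝ)
    (Clow : Matrix (Fin q) (Fin m ⊕ Fin r) ℝ)
    (hrank : (fromRows Cbar Clow).rank = p + q) :
    let Cstar : Matrix (Fin p ⊕ Fin q) (Fin m ⊕ Fin r) ℝ := fromRows Cbar Clow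
    let Mplus : Matrix (Fin m ⊕ Fin r) (Fin m ⊕ Fin r) ℝ :=
      1 - Wstar * Cbarᵀ * (Cbar * Wstar * Cbarᵀ)⁻¹ * Cbar
    let Jstar : Matrix (Fin m) (Fin m ⊕ Fin r) ℝ := fromCols 1 0
    (Wstar * (Cstarᵀ * (Cstar * Wstar * Cstarᵀ)⁻¹ * Cstar -
        Cbarᵀ * (Cbar * Wstar * Cbarᵀ)⁻¹ * Cbar) * Wstar =
      Wstar * Mplusᵀ * Clowᵀ * (Clow * Mplus * Wstar * Clowᵀ)⁻¹ * Clow * Mplus * Wstar) ∧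
    (Wstar * (Cstarᵀ * (Cstar * Wstar * Cstarᵀ)⁻¹ * Cstar -
        Cbarᵀ * (Cbar * Wstar * Cbarᵀ)⁻¹ * Cbar) * Wstar).PosSemidef ∧
    ∀ i, (Jstar * Wstar * Cbarᵀ * (Cbar * Wstar * Cbarᵀ)⁻¹ * Cbar * Wstar * Jstarᵀ) i i ≤
      (Jstar * Wstar * Cstarᵀ * (Cstar * Wstar * Cstarᵀ)⁻¹ * Cstar * Wstar * Jstarᵀ) i i := by
  intro Cstar Mplus Jstar
  have hW : Wstarᵀ = Wstar := by
    have := hWstar.isHermitian.eq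
    rwa [conjTranspose_eq_transpose_of_trivial] at this
  -- linear independence of rows
  have hli : LinearIndependent ℝ (fun i => Cstar i) := by
    rw [linearIndependent_iff_card_eq_finrank_span]
    have h2 : Set.finrank ℝ (Set.range fun i => Cstar i) = Cstar.rank :=
      (Matrix.rank_eq_finrank_span_row Cstar).symm
    rw [h2, show Cstar.rank = p + q from hrank]
    simp
  have hbar : LinearIndependent ℝ (fun i => Cbar i) := by
    have := hli.comp Sum.inl Sum.inl_injective
    exact this
  have hApd : (Cbar * Wstar * Cbarᵀ).PosDef := posdef_CWCt Wstar hWstar Cbar hbar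
  have hKpd : (Cstar * Wstar * Cstarᵀ).PosDef := posdef_CWCt Wstar hWstar Cstar hli
  set A := Cbar * Wstar * Cbarᵀ with hAdef
  set B := Cbar * Wstar * Clowᵀ with hBdef
  set Bt := Clow * Wstar * Cbarᵀ with hBtdef
  set D := Clow * Wstar * Clowᵀ with hDdef
  set S := D - Bt * A⁻¹ * B with hSdef
  have hBt : Bᵀ = Bt := by
    rw [hBdef, hBtdef]
    simp [transpose_mul, hW, Matrix.mul_assoc]
  have hAsymm : Aᵀ = A := by
    rw [hAdef]; simp [transpose_mul, hW, Matrix.mul_assoc]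
  have hAiT : (A⁻¹)ᵀ = A⁻¹ := by rw [transpose_nonsing_inv, hAsymm]
  have hKb : Cstar * Wstar * Cstarᵀ = fromBlocks A B Bt D := by
    show fromRows Cbar Clow * Wstar * (fromRows Cbar Clow)ᵀ = _
    rw [transpose_fromRows, fromRows_mul, fromRows_mul_fromCols]
  haveI : Invertible A := A.invertibleOfIsUnitDet (isUnit_iff_ne_zero.mpr hApd.det_pos.ne')
  haveI : Invertible (fromBlocks A B Bt D) :=
    (fromBlocks A B Bt D).invertibleOfIsUnitDet
      (by rw [← hKb]; exact isUnit_iff_ne_zero.mpr hKpd.det_pos.ne')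
  haveI iS' : Invertible (D - Bt * ⅟A * B) := invertibleOfFromBlocks₁₁Invertible A B Bt D
  have hiA : ⅟A = A⁻¹ := invOf_eq_nonsing_inv A
  have hSS : D - Bt * ⅟A * B = S := by rw [hiA]
  haveI iS : Invertible S := iS'.copy S hSS.symm
  have hSunit : IsUnit S.det := isUnit_det_of_invertible S
  have h1 : ⅟(D - Bt * ⅟A * B) = S⁻¹ := by rw [invOf_eq_nonsing_inv, hSS]
  have hKinv : (fromBlocks A B Bt D)⁻¹ =
      fromBlocks (⅟A + ⅟A * B * S⁻¹ * Bt * ⅟A) (-(⅟A * B * S⁻¹)) (-(S⁻¹ * Bt * ⅟A)) S⁻¹ := by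
    rw [← invOf_eq_nonsing_inv (fromBlocks A B Bt D), invOf_fromBlocks₁₁_eq, h1]
  rw [hiA] at hKinv
  -- S posdef facts
  have hSpsd : S.PosSemidef := by
    have hBH : Bᴴ = Bt := by rw [conjTranspose_eq_transpose_of_trivial, hBt]
    have hKpsd : (fromBlocks A B Bᴴ D).PosSemidef := by
      rw [hBH, ← hKb]; exact hKpd.posSemidef
    have := (PosDef.fromBlocks₁₁ B D hApd).mp hKpsd
    rwa [hBH] at this
  have hSinv : S⁻¹.PosSemidef := psd_inv hSpsd hSunit
  have hM : Mplus = 1 - Wstar * Cbarᵀ * A⁻¹ * Cbar := rfl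
  have hS' : Clow * Mplus * Wstar * Clowᵀ = S := by
    rw [hM, hSdef, hBdef, hBtdef, hDdef]
    simp only [Matrix.mul_sub, Matrix.sub_mul, Matrix.mul_one, Matrix.one_mul, Matrix.mul_assoc]
  -- main equality
  have main : Wstar * (Cstarᵀ * (Cstar * Wstar * Cstarᵀ)⁻¹ * Cstar - Cbarᵀ * A⁻¹ * Cbar) * Wstar =
      Wstar * Mplusᵀ * Clowᵀ * (Clow * Mplus * Wstar * Clowᵀ)⁻¹ * Clow * Mplus * Wstar := by
    rw [hS', hKb, hKinv, hM,
      show Cstarᵀ = fromCols Cbarᵀ Clowᵀ from transpose_fromRows _ _,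
      show Cstar = fromRows Cbar Clow from rfl,
      fromCols_mul_fromBlocks, fromCols_mul_fromRows, hBdef, hBtdef]
    simp only [transpose_sub, transpose_one, transpose_mul, transpose_transpose, hW, hAiT]
    simp only [Matrix.mul_sub, Matrix.sub_mul, Matrix.mul_add, Matrix.add_mul, Matrix.mul_one,
      Matrix.one_mul, Matrix.neg_mul, Matrix.mul_neg, Matrix.mul_assoc, neg_neg]
    abel
  have hPpsd : (Wstar * (Cstarᵀ * (Cstar * Wstar * Cstarᵀ)⁻¹ * Cstar -
      Cbarᵀ * A⁻¹ * Cbar) * Wstar).PosSemidef := by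
    rw [main, hS']
    have hfin := hSinv.conjTranspose_mul_mul_same (Clow * Mplus * Wstar)
    have he : (Clow * Mplus * Wstar)ᴴ * S⁻¹ * (Clow * Mplus * Wstar) =
        Wstar * Mplusᵀ * Clowᵀ * S⁻¹ * Clow * Mplus * Wstar := by
      rw [conjTranspose_eq_transpose_of_trivial]
      simp only [transpose_mul, hW, Matrix.mul_assoc]
    rwa [he] at hfin
  refine ⟨main, hPpsd, ?_⟩
  intro i
  have hJpsd : (Jstar * (Wstar * (Cstarᵀ * (Cstar * Wstar * Cstarᵀ)⁻¹ * Cstar -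
      Cbarᵀ * A⁻¹ * Cbar) * Wstar) * Jstarᵀ).PosSemidef := by
    have := hPpsd.mul_mul_conjTranspose_same Jstar
    rwa [conjTranspose_eq_transpose_of_trivial] at this
  have hdiag := psd_diag hJpsd i
  have hdiff : Jstar * (Wstar * (Cstarᵀ * (Cstar * Wstar * Cstarᵀ)⁻¹ * Cstar -
      Cbarᵀ * A⁻¹ * Cbar) * Wstar) * Jstarᵀ =
      Jstar * Wstar * Cstarᵀ * (Cstar * Wstar * Cstarᵀ)⁻¹ * Cstar * Wstar * Jstarᵀ -
      Jstar * Wstar * Cbarᵀ * A⁻¹ * Cbar * Wstar * Jstarᵀ := by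
    simp only [Matrix.mul_sub, Matrix.sub_mul, Matrix.mul_assoc]
  rw [hdiff, Matrix.sub_apply] at hdiag
  linarith
end

section
/- Let W be symmetric positive definite of size m+1, ψ = [-φ, 1] with φ ∈ ℝ^{1×m}, write W = [[W_y, w'],[w, w_c]] with W_y ∈ ℝ^{m×m}, w ∈ ℝ^{1×m}. Then the total variance reduction tr(J W ψ'(ψ W ψ')⁻¹ ψ W J') is strictly positive if and only if φ W_y ≠ w. -/
open Matrix

theorem flap_positive_reduction_condition (m : ℕ)
    (W : Matrix (Fin m ⊕ Fin 1) (Fin m ⊕ Fin 1) ℝ) (hW : W.PosDef)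
    (φ : Matrix (Fin 1) (Fin m) ℝ) :
    let ψ : Matrix (Fin 1) (Fin m ⊕ Fin 1) ℝ := fromCols (-φ) 1
    let J : Matrix (Fin m) (Fin m ⊕ Fin 1) ℝ := fromCols 1 0
    (0 < (J * W * ψᵀ * (ψ * W * ψᵀ)⁻¹ * ψ * W * Jᵀ).trace ↔
      φ * W.toBlocks₁₁ ≠ W.toBlocks₂₁) := by
  intro ψ J
  have hsym : Wᵀ = W := hW.1
  -- the block decomposition of W
  have hWb : W = fromBlocks W.toBlocks₁₁ W.toBlocks₁₂ W.toBlocks₂₁ W.toBlocks₂₂ :=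
    (fromBlocks_toBlocks W).symm
  -- compute D := ψ * W * Jᵀ
  have hJT : Jᵀ = fromRows (1 : Matrix (Fin m) (Fin m) ℝ) (0 : Matrix (Fin 1) (Fin m) ℝ) := by
    show (fromCols (1 : Matrix (Fin m) (Fin m) ℝ) 0)ᵀ = _
    rw [transpose_fromCols, transpose_one, transpose_zero]
  set D : Matrix (Fin 1) (Fin m) ℝ := ψ * W * Jᵀ with hDdef
  have hD : D = W.toBlocks₂₁ - φ * W.toBlocks₁₁ := by
    rw [hDdef]
    conv_lhs => rw [hWb]
    rw [show ψ = fromCols (-φ) 1 from rfl, fromCols_mul_fromBlocks, hJT,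
      fromCols_mul_fromRows]
    simp [neg_mul, sub_eq_neg_add]
  -- A = Dᵀ
  have hA : J * W * ψᵀ = Dᵀ := by
    rw [hDdef, transpose_mul, transpose_mul, transpose_transpose, hsym]
    exact Matrix.mul_assoc J W ψᵀ
  -- positivity of the scalar c
  set c : ℝ := (ψ * W * ψᵀ) 0 0 with hcdef
  have hc : 0 < c := by
    have hx : (fun j => ψ 0 j) ≠ 0 := by
      intro h
      have := congrFun h (Sum.inr 0)
      simp [ψ, fromCols] at this
    have hpos := hW.dotProduct_mulVec_pos (x := fun j => ψ 0 j) hx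
    have hEq : c = dotProduct (star (fun j => ψ 0 j)) (W *ᵥ (fun j => ψ 0 j)) := by
      simp only [hcdef, mul_apply, transpose_apply, dotProduct, mulVec, star_trivial,
        Finset.sum_mul, Finset.mul_sum]
      rw [Finset.sum_comm]
      exact Finset.sum_congr rfl fun k _ => Finset.sum_congr rfl fun j _ => by ring
    rw [hEq]; exact hpos
  have hcne : c ≠ 0 := ne_of_gt hc
  -- the 1×1 inverse
  have hinv : (ψ * W * ψᵀ)⁻¹ = c⁻¹ • (1 : Matrix (Fin 1) (Fin 1) ℝ) := by
    have h1 : ψ * W * ψᵀ = c • (1 : Matrix (Fin 1) (Fin 1) ℝ) := by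
      ext i j
      rw [Subsingleton.elim i 0, Subsingleton.elim j 0]
      simp [hcdef]
    rw [h1]
    refine inv_eq_right_inv ?_
    rw [Matrix.smul_mul, Matrix.mul_smul, smul_smul, mul_inv_cancel₀ hcne, Matrix.mul_one,
      one_smul]
  -- compute the trace
  have hT : (J * W * ψᵀ * (ψ * W * ψᵀ)⁻¹ * ψ * W * Jᵀ).trace
      = c⁻¹ * ∑ i, ∑ j, (D j i) ^ 2 := by
    have : J * W * ψᵀ * (ψ * W * ψᵀ)⁻¹ * ψ * W * Jᵀ
        = Dᵀ * ((ψ * W * ψᵀ)⁻¹) * D := by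
      rw [hA, hDdef]
      simp only [Matrix.mul_assoc]
    rw [this, hinv, Matrix.mul_smul, Matrix.mul_one, Matrix.smul_mul, trace_smul, smul_eq_mul]
    congr 1
    simp [trace, mul_apply, Matrix.diag, sq]
  -- the sum of squares is positive iff D ≠ 0
  have hS : (0 < ∑ i, ∑ j, (D j i) ^ 2) ↔ D ≠ 0 := by
    constructor
    · intro h h0
      rw [h0] at h
      simp at h
    · intro h
      obtain ⟨j, i, hij⟩ : ∃ j i, D j i ≠ 0 := by
        by_contra hc'
        push_neg at hc'
        exact h (by ext j i; simpa using hc' j i)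
      refine Finset.sum_pos' (fun i _ => Finset.sum_nonneg fun j _ => sq_nonneg _)
        ⟨i, Finset.mem_univ i, Finset.sum_pos' (fun j _ => sq_nonneg _)
          ⟨j, Finset.mem_univ j, by positivity⟩⟩
  rw [hT, mul_pos_iff_of_pos_left (inv_pos.2 hc), hS, hD, sub_ne_zero]
  exact ne_comm
end

section
/- Let W be symmetric positive definite of size m+p and S ∈ ℝ^{(m+p)×m} of full column rank. Among all G ∈ ℝ^{m×(m+p)} with G S = I_m, the matrix G* = (S' W⁻¹ S)⁻¹ S' W⁻¹ minimizes tr(G W G'). That is, tr(G W G') ≥ tr(G* W G*') for all G with G S = I_m. -/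
open Matrix

private lemma conjT_eq_transpose {k l : Type*} (A : Matrix k l ℝ) : Aᴴ = Aᵀ := by
  ext i j; simp [conjTranspose_apply]

private lemma trace_nonneg_of_psd {n : Type*} [Fintype n] [DecidableEq n]
    {M : Matrix n n ℝ} (h : M.PosSemidef) : 0 ≤ M.trace := by
  rw [Matrix.trace]
  refine Finset.sum_nonneg fun i _ => ?_
  have := h.dotProduct_mulVec_nonneg (Pi.single i 1)
  simpa [Matrix.diag, dotProduct, mulVec, Pi.single_apply, Finset.mul_sum] using this

private lemma mulVec_injective_of_rank {m p : ℕ}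
    (S : Matrix (Fin (m + p)) (Fin m) ℝ) (hS : S.rank = m) :
    Function.Injective S.mulVecLin := by
  rw [← LinearMap.ker_eq_bot]
  have hrn := S.mulVecLin.finrank_range_add_finrank_ker
  rw [show Module.finrank ℝ (LinearMap.range S.mulVecLin) = m from hS] at hrn
  simp only [Module.finrank_pi, Fintype.card_fin] at hrn
  have : Module.finrank ℝ (LinearMap.ker S.mulVecLin) = 0 := by omega
  exact Submodule.finrank_eq_zero.mp this

theorem flap_minT_trace_optimality (m p : ℕ)
    (W : Matrix (Fin (m + p)) (Fin (m + p)) ℝ) (hW : W.PosDef)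
    (S : Matrix (Fin (m + p)) (Fin m) ℝ) (hS : S.rank = m) :
    let Gstar : Matrix (Fin m) (Fin (m + p)) ℝ :=
      (Sᵀ * W⁻¹ * S)⁻¹ * Sᵀ * W⁻¹
    ∀ G : Matrix (Fin m) (Fin (m + p)) ℝ, G * S = 1 →
      (Gstar * W * Gstarᵀ).trace ≤ (G * W * Gᵀ).trace := by
  intro Gstar G hG
  have hWi : W⁻¹.PosDef := hW.inv
  have hWsym : Wᵀ = W := by
    rw [← conjT_eq_transpose]; exact hW.isHermitian
  set A := Sᵀ * W⁻¹ * S with hAdef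
  have hSinj := mulVec_injective_of_rank S hS
  have hA : A.PosDef := by
    refine Matrix.posDef_iff_dotProduct_mulVec.mpr ⟨?_, ?_⟩
    · show Aᴴ = A
      rw [conjT_eq_transpose, hAdef, Matrix.transpose_mul, Matrix.transpose_mul,
        transpose_transpose, ← conjT_eq_transpose W⁻¹, hWi.isHermitian.eq, Matrix.mul_assoc]
    · intro x hx
      have hSx : S *ᵥ x ≠ 0 := by
        intro h
        apply hx
        have : S.mulVecLin x = S.mulVecLin 0 := by simpa using h
        exact hSinj this
      have : star x ⬝ᵥ A *ᵥ x = star (S *ᵥ x) ⬝ᵥ W⁻¹ *ᵥ (S *ᵥ x) := by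
        rw [hAdef, ← Matrix.mulVec_mulVec, ← Matrix.mulVec_mulVec,
          Matrix.dotProduct_mulVec, Matrix.vecMul_transpose]
        simp [Matrix.dotProduct_mulVec]
      rw [this]
      exact hWi.dotProduct_mulVec_pos hSx
  have hdetA : IsUnit A.det := hA.det_pos.ne'.isUnit
  have hdetW : IsUnit W.det := hW.det_pos.ne'.isUnit
  have hGstarS : Gstar * S = 1 := by
    show A⁻¹ * Sᵀ * W⁻¹ * S = 1
    rw [Matrix.mul_assoc, Matrix.mul_assoc, ← Matrix.mul_assoc Sᵀ, ← hAdef,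
      Matrix.nonsing_inv_mul A hdetA]
  have hGstarW : Gstar * W = A⁻¹ * Sᵀ := by
    show A⁻¹ * Sᵀ * W⁻¹ * W = _
    rw [Matrix.mul_assoc, Matrix.nonsing_inv_mul W hdetW, Matrix.mul_one]
  set D := G - Gstar with hDdef
  have hDS : D * S = 0 := by
    rw [hDdef, Matrix.sub_mul, hG, hGstarS, sub_self]
  have hcross : Gstar * W * Dᵀ = 0 := by
    rw [hGstarW, Matrix.mul_assoc, ← Matrix.transpose_mul, hDS, Matrix.transpose_zero,
      Matrix.mul_zero]
  have hcross' : D * W * Gstarᵀ = 0 := by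
    have : (Gstar * W * Dᵀ)ᵀ = D * W * Gstarᵀ := by
      rw [Matrix.transpose_mul, Matrix.transpose_mul, transpose_transpose, hWsym,
        Matrix.mul_assoc]
    rw [← this, hcross, Matrix.transpose_zero]
  have hexp : G * W * Gᵀ = Gstar * W * Gstarᵀ + D * W * Dᵀ := by
    have hGd : G = Gstar + D := by rw [hDdef]; abel
    rw [hGd]
    simp only [Matrix.transpose_add, Matrix.add_mul, Matrix.mul_add]
    rw [hcross, hcross']
    abel
  have hpsd : (D * W * Dᵀ).PosSemidef := by
    have := hW.posSemidef.mul_mul_conjTranspose_same D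
    rwa [conjT_eq_transpose] at this
  have := trace_nonneg_of_psd hpsd
  rw [hexp, Matrix.trace_add]
  linarith
end

section
/- Let W be symmetric positive definite, C = [-Φ I_p], S = [I_m; Φ], M = I - W C'(C W C')⁻¹ C, and G = (S' W⁻¹ S)⁻¹ S' W⁻¹. Then M = S G, i.e., the orthogonal (in the W⁻¹ metric) projection onto the constraint subspace and the MinT-type reconciliation mapping coincide. -/
open Matrix

lemma posDef_conj_aux {n k : Type*} [Fintype n] [Fintype k] [DecidableEq n] [DecidableEq k]
    {A : Matrix n n ℝ} (hA : A.PosDef) (B : Matrix n k ℝ)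
    (hB : ∀ x : k → ℝ, B *ᵥ x = 0 → x = 0) : (Bᵀ * A * B).PosDef := by
  have hBt : Bᴴ = Bᵀ := by ext i j; simp [conjTranspose]
  refine posDef_iff_dotProduct_mulVec.mpr ⟨?_, ?_⟩
  · have h := isHermitian_conjTranspose_mul_mul B hA.isHermitian
    rwa [hBt] at h
  · intro x hx
    have hBx : B *ᵥ x ≠ 0 := fun h => hx (hB x h)
    have hpos := hA.dotProduct_mulVec_pos hBx
    have hrw : star x ⬝ᵥ (Bᵀ * A * B) *ᵥ x = star (B *ᵥ x) ⬝ᵥ A *ᵥ (B *ᵥ x) := by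
      rw [← mulVec_mulVec, ← mulVec_mulVec, dotProduct_mulVec, vecMul_transpose]
      simp [star, dotProduct_mulVec]
    rwa [hrw]

theorem flap_M_eq_SG (m p : ℕ)
    (Φ : Matrix (Fin p) (Fin m) ℝ)
    (W : Matrix (Fin m ⊕ Fin p) (Fin m ⊕ Fin p) ℝ) (hW : W.PosDef) :
    let C : Matrix (Fin p) (Fin m ⊕ Fin p) ℝ := fromCols (-Φ) 1
    let S : Matrix (Fin m ⊕ Fin p) (Fin m) ℝ := fromRows 1 Φ
    let M : Matrix (Fin m ⊕ Fin p) (Fin m ⊕ Fin p) ℝ :=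
      1 - W * Cᵀ * (C * W * Cᵀ)⁻¹ * C
    let G : Matrix (Fin m) (Fin m ⊕ Fin p) ℝ := (Sᵀ * W⁻¹ * S)⁻¹ * Sᵀ * W⁻¹
    M = S * G := by
  intro C S M G
  have hCS : C * S = 0 := by
    show fromCols (-Φ) 1 * fromRows 1 Φ = 0
    rw [fromCols_mul_fromRows]
    simp
  have hSC : Sᵀ * Cᵀ = 0 := by
    rw [← transpose_mul, hCS, transpose_zero]
  have hWH : Wᵀ = W := by
    have h := hW.isHermitian
    ext i j
    simpa using congrFun (congrFun h i) j
  have hSinj : ∀ x : Fin m → ℝ, S *ᵥ x = 0 → x = 0 := by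
    intro x hx
    funext i
    have := congrFun hx (Sum.inl i)
    simpa [S, fromRows_mulVec] using this
  have hCtinj : ∀ x : Fin p → ℝ, Cᵀ *ᵥ x = 0 → x = 0 := by
    intro x hx
    funext j
    have := congrFun hx (Sum.inr j)
    simpa [C, transpose_fromCols, fromRows_mulVec] using this
  have hWinv : (W⁻¹).PosDef := hW.inv
  have hA1 : (Sᵀ * W⁻¹ * S).PosDef := posDef_conj_aux hWinv S hSinj
  have hA2 : (C * W * Cᵀ).PosDef := by
    have := posDef_conj_aux hW Cᵀ hCtinj
    rwa [transpose_transpose] at this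
  have hWu : IsUnit W.det := hW.det_pos.ne'.isUnit
  have h1u : IsUnit (Sᵀ * W⁻¹ * S).det := hA1.det_pos.ne'.isUnit
  have h2u : IsUnit (C * W * Cᵀ).det := hA2.det_pos.ne'.isUnit
  set X : Matrix (Fin m ⊕ Fin p) (Fin m ⊕ Fin p) ℝ := fromCols S (W * Cᵀ) with hX
  have hXW : Xᵀ * W⁻¹ * X = fromBlocks (Sᵀ * W⁻¹ * S) 0 0 (C * W * Cᵀ) := by
    rw [hX, transpose_fromCols, transpose_mul, transpose_transpose, hWH,
      fromRows_mul, fromRows_mul_fromCols]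
    have e1 : Sᵀ * W⁻¹ * (W * Cᵀ) = 0 := by
      rw [Matrix.mul_assoc, nonsing_inv_mul_cancel_left _ _ hWu, hSC]
    have e2 : C * W * W⁻¹ * S = 0 := by
      rw [mul_nonsing_inv_cancel_right _ _ hWu, hCS]
    have e3 : C * W * W⁻¹ * (W * Cᵀ) = C * W * Cᵀ := by
      rw [mul_nonsing_inv_cancel_right _ _ hWu, ← Matrix.mul_assoc]
    rw [e1, e2, e3]
  have hXu : IsUnit X.det := by
    have hd1 : (Xᵀ * W⁻¹ * X).det = (Sᵀ * W⁻¹ * S).det * (C * W * Cᵀ).det := by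
      rw [hXW, det_fromBlocks_zero₂₁]
    have hd2 : (Xᵀ * W⁻¹ * X).det = X.det * W⁻¹.det * X.det := by
      rw [det_mul, det_mul, det_transpose]
    have hne : X.det * W⁻¹.det * X.det ≠ 0 := by
      rw [← hd2, hd1]
      exact (mul_pos hA1.det_pos hA2.det_pos).ne'
    exact (left_ne_zero_of_mul (left_ne_zero_of_mul hne)).isUnit
  have hMS : M * S = S := by
    show (1 - W * Cᵀ * (C * W * Cᵀ)⁻¹ * C) * S = S
    rw [Matrix.sub_mul, Matrix.one_mul]
    simp only [Matrix.mul_assoc]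
    rw [hCS]
    simp
  have hSGS : S * G * S = S := by
    show S * ((Sᵀ * W⁻¹ * S)⁻¹ * Sᵀ * W⁻¹) * S = S
    have key := nonsing_inv_mul _ h1u
    simp only [Matrix.mul_assoc] at key ⊢
    rw [key, Matrix.mul_one]
  have hMWC : M * (W * Cᵀ) = 0 := by
    show (1 - W * Cᵀ * (C * W * Cᵀ)⁻¹ * C) * (W * Cᵀ) = 0
    rw [Matrix.sub_mul, Matrix.one_mul]
    have key := nonsing_inv_mul _ h2u
    simp only [Matrix.mul_assoc] at key ⊢
    rw [key, Matrix.mul_one, sub_self]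
  have hSGWC : S * G * (W * Cᵀ) = 0 := by
    show S * ((Sᵀ * W⁻¹ * S)⁻¹ * Sᵀ * W⁻¹) * (W * Cᵀ) = 0
    have key : W⁻¹ * (W * Cᵀ) = Cᵀ := nonsing_inv_mul_cancel_left _ _ hWu
    simp only [Matrix.mul_assoc]
    rw [key, hSC]
    simp
  have hMX : (M - S * G) * X = 0 := by
    rw [hX, mul_fromCols, Matrix.sub_mul M (S * G) S, Matrix.sub_mul M (S * G) (W * Cᵀ),
      hMS, hSGS, hMWC, hSGWC, sub_self, sub_self, fromCols_zero]
  have hfin : M - S * G = 0 := by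
    have h := congrArg (· * X⁻¹) hMX
    simpa [Matrix.mul_assoc, mul_nonsing_inv _ hXu] using h
  exact sub_eq_zero.mp hfin
end
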